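/- A connected subgraph Λ of Γ is A-complete if and only if it is complete, i.e., Λ contains every edge of Γ both of whose endpoints are vertices of Λ. More generally, an arbitrary subgraph of Γ is A-complete if and only if each of its connected components is A-complete. -/

import Mathlib

/-- The underlying simple graph of the subgraph of an oriented graph given by the
set of edges `A` (adjacency through edges in `A`). -/
def graphSub {Vt E : Type*} (ini fin : E → Vt) (A : Set E) : SimpleGraph Vt where
  Adj v w := v ≠ w ∧ ∃ a ∈ A, s(ini a, fin a) = s(v, w)
  symm := by
    constructor
    rintro v w ⟨h, a, ha, ha'⟩
    exact ⟨h.symm, a, ha, ha'.trans (Sym2.eq_swap)⟩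
  loopless := ⟨fun v h => h.1 rfl⟩

/-- The vector `x_a = e_{f(a)} - e_{i(a)}` associated to an edge `a`. -/
def edgeVec {Vt E : Type*} [DecidableEq Vt] (ini fin : E → Vt) (a : E) : Vt → ℝ :=
  Pi.single (fin a) 1 - Pi.single (ini a) 1

/-- The vertex set of the subgraph with edge set `A`: all endpoints of edges of `A`. -/
def vertexSet {Vt E : Type*} (ini fin : E → Vt) (A : Set E) : Set Vt :=
  {v | ∃ a ∈ A, v = ini a ∨ v = fin a}

/-- The subgraph with edge set `A` is connected: any two of its vertices are
joined by a path through edges of `A`. -/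
def EdgeConnected {Vt E : Type*} (ini fin : E → Vt) (A : Set E) : Prop :=
  ∀ a ∈ A, ∀ b ∈ A, (graphSub ini fin A).Reachable (ini a) (ini b)

/-- The subgraph with edge set `A` is A-complete:
`span {x_a : a ∈ A} ∩ Δ_Γ = {x_a : a ∈ A}`. -/
def IsAComplete {Vt E : Type*} [DecidableEq Vt] (ini fin : E → Vt) (A : Set E) : Prop :=
  (Submodule.span ℝ (edgeVec ini fin '' A) : Set (Vt → ℝ)) ∩
      Set.range (edgeVec ini fin) = edgeVec ini fin '' A

set_option linter.unusedSectionVars false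

section Aux
variable {Vt E : Type*} [Fintype Vt] [DecidableEq Vt] [Fintype E]
  (ini fin : E → Vt)

lemma aux_edgeVec_apply (a : E) (v : Vt) :
    edgeVec ini fin a v = (if v = fin a then (1:ℝ) else 0) - (if v = ini a then 1 else 0) := by
  simp [edgeVec, Pi.single_apply, eq_comm]

lemma aux_adj_of_mem (hloop : ∀ a, ini a ≠ fin a) {A : Set E} {a : E} (ha : a ∈ A) :
    (graphSub ini fin A).Adj (ini a) (fin a) :=
  ⟨hloop a, a, ha, rfl⟩

lemma aux_edgeVec_inj (hloop : ∀ a, ini a ≠ fin a)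
    (hsimple : Function.Injective fun a => s(ini a, fin a)) :
    Function.Injective (edgeVec ini fin) := by
  intro a b h
  have hfa := congrFun h (fin a)
  have hia := congrFun h (ini a)
  rw [aux_edgeVec_apply, aux_edgeVec_apply] at hfa hia
  have hf : fin a = fin b := by
    by_contra hne
    simp only [if_pos rfl, if_neg (Ne.symm (hloop a)), if_neg hne] at hfa
    split_ifs at hfa <;> norm_num at hfa
  have hi : ini a = ini b := by
    by_contra hne
    simp only [if_pos rfl, if_neg (hloop a), if_neg hne] at hia
    split_ifs at hia <;> norm_num at hia
  exact hsimple (show s(ini a, fin a) = s(ini b, fin b) by rw [hi, hf])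

lemma aux_reach_span {A : Set E} {v w : Vt}
    (h : (graphSub ini fin A).Reachable v w) :
    Pi.single w (1:ℝ) - Pi.single v 1 ∈ Submodule.span ℝ (edgeVec ini fin '' A) := by
  obtain ⟨p⟩ := h
  induction p with
  | nil => simpa using Submodule.zero_mem _
  | @cons u v' w h p ih =>
    obtain ⟨hne, a, ha, hs⟩ := h
    have hx : edgeVec ini fin a ∈ Submodule.span ℝ (edgeVec ini fin '' A) :=
      Submodule.subset_span ⟨a, ha, rfl⟩
    have heq : (Pi.single w (1:ℝ) - Pi.single u 1 : Vt → ℝ) =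
        (Pi.single w 1 - Pi.single v' 1) + ((Pi.single v' 1 : Vt → ℝ) - Pi.single u 1) := by abel
    rw [heq]
    refine add_mem ih ?_
    rcases Sym2.eq_iff.mp hs with ⟨h1, h2⟩ | ⟨h1, h2⟩
    · have : Pi.single v' (1:ℝ) - Pi.single u 1 = edgeVec ini fin a := by
        rw [edgeVec, h1, h2]
      rw [this]; exact hx
    · have : Pi.single v' (1:ℝ) - Pi.single u 1 = -edgeVec ini fin a := by
        rw [edgeVec, h1, h2]; abel
      rw [this]; exact neg_mem hx

lemma aux_span_reach (hloop : ∀ a, ini a ≠ fin a) {A : Set E} {b : E}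
    (hb : edgeVec ini fin b ∈ Submodule.span ℝ (edgeVec ini fin '' A)) :
    (graphSub ini fin A).Reachable (ini b) (fin b) := by
  classical
  set G := graphSub ini fin A with hG
  set s : Finset Vt := Finset.univ.filter (fun v => G.Reachable (ini b) v) with hs
  set φ : (Vt → ℝ) →ₗ[ℝ] ℝ := ∑ v ∈ s, LinearMap.proj v with hφdef
  have hφ : ∀ f : Vt → ℝ, φ f = ∑ v ∈ s, f v := by
    intro f; simp [hφdef, LinearMap.proj]
  have hsum : ∀ w : Vt, (∑ v ∈ s, Pi.single w (1:ℝ) v) = if w ∈ s then 1 else 0 := by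
    intro w
    simp [Pi.single_apply, Finset.sum_ite_eq' s w (fun _ => (1:ℝ))]
  have hker : ∀ a ∈ A, φ (edgeVec ini fin a) = 0 := by
    intro a ha
    have hiff : ini a ∈ s ↔ fin a ∈ s := by
      simp only [hs, Finset.mem_filter, Finset.mem_univ, true_and]
      exact ⟨fun h => h.trans (aux_adj_of_mem ini fin hloop ha).reachable,
        fun h => h.trans (aux_adj_of_mem ini fin hloop ha).symm.reachable⟩
    rw [hφ, edgeVec]
    simp only [Pi.sub_apply, Finset.sum_sub_distrib, hsum]
    by_cases h : ini a ∈ s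
    · rw [if_pos h, if_pos (hiff.mp h)]; ring
    · rw [if_neg h, if_neg (fun hh => h (hiff.mpr hh))]; ring
  have hspan : Submodule.span ℝ (edgeVec ini fin '' A) ≤ LinearMap.ker φ := by
    rw [Submodule.span_le]
    rintro _ ⟨a, ha, rfl⟩
    exact hker a ha
  have h0 : φ (edgeVec ini fin b) = 0 := hspan hb
  rw [hφ, edgeVec] at h0
  simp only [Pi.sub_apply, Finset.sum_sub_distrib, hsum] at h0
  have hini : ini b ∈ s := by
    simp only [hs, Finset.mem_filter, Finset.mem_univ, true_and]
    exact SimpleGraph.Reachable.refl _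
  rw [if_pos hini] at h0
  have hfin : fin b ∈ s := by
    by_contra hh
    rw [if_neg hh] at h0; norm_num at h0
  simpa only [hs, Finset.mem_filter, Finset.mem_univ, true_and] using hfin

lemma aux_isAComplete_iff (hloop : ∀ a, ini a ≠ fin a)
    (hsimple : Function.Injective fun a => s(ini a, fin a)) (A : Set E) :
    IsAComplete ini fin A ↔
      ∀ b : E, (graphSub ini fin A).Reachable (ini b) (fin b) → b ∈ A := by
  constructor
  · intro h b hb
    have hmem : edgeVec ini fin b ∈
        (Submodule.span ℝ (edgeVec ini fin '' A) : Set (Vt → ℝ)) ∩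
          Set.range (edgeVec ini fin) :=
      ⟨aux_reach_span ini fin hb, ⟨b, rfl⟩⟩
    rw [h] at hmem
    obtain ⟨a, ha, hab⟩ := hmem
    exact (aux_edgeVec_inj ini fin hloop hsimple hab) ▸ ha
  · intro h
    apply Set.Subset.antisymm
    · rintro f ⟨hf1, b, rfl⟩
      exact ⟨b, h b (aux_span_reach ini fin hloop hf1), rfl⟩
    · rintro _ ⟨a, ha, rfl⟩
      exact ⟨Submodule.subset_span ⟨a, ha, rfl⟩, ⟨a, rfl⟩⟩

lemma aux_mem_vertexSet {A : Set E} {v w : Vt}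
    (h : (graphSub ini fin A).Reachable v w) (hne : v ≠ w) :
    v ∈ vertexSet ini fin A := by
  obtain ⟨p⟩ := h
  cases p with
  | nil => exact absurd rfl hne
  | cons h p =>
    obtain ⟨_, a, ha, hs⟩ := h
    rcases Sym2.eq_iff.mp hs with ⟨h1, _⟩ | ⟨_, h2⟩
    · exact ⟨a, ha, Or.inl h1.symm⟩
    · exact ⟨a, ha, Or.inr h2.symm⟩

lemma aux_reach_mono {A B : Set E} (hAB : A ⊆ B) {v w : Vt}
    (h : (graphSub ini fin A).Reachable v w) :
    (graphSub ini fin B).Reachable v w := by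
  refine h.mono ?_
  rintro x y ⟨hne, a, ha, hs⟩
  exact ⟨hne, a, hAB ha, hs⟩

lemma aux_reach_component {A : Set E} {r : Vt} :
    ∀ {v w : Vt}, (graphSub ini fin A).Walk v w →
      (graphSub ini fin A).Reachable r v →
      (graphSub ini fin {c | c ∈ A ∧ (graphSub ini fin A).Reachable r (ini c)}).Reachable v w := by
  intro v w p
  induction p with
  | nil => exact fun _ => SimpleGraph.Reachable.refl _
  | @cons u u' w h p ih =>
    intro hru
    obtain ⟨hne, c, hc, hs⟩ := h
    have hru' : (graphSub ini fin A).Reachable r u' :=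
      hru.trans (SimpleGraph.Adj.reachable ⟨hne, c, hc, hs⟩)
    have hric : (graphSub ini fin A).Reachable r (ini c) := by
      rcases Sym2.eq_iff.mp hs with ⟨h1, _⟩ | ⟨h1, _⟩
      · rw [h1]; exact hru
      · rw [h1]; exact hru'
    have hadj : (graphSub ini fin {c | c ∈ A ∧ (graphSub ini fin A).Reachable r (ini c)}).Adj u u' :=
      ⟨hne, c, ⟨hc, hric⟩, hs⟩
    exact hadj.reachable.trans (ih hru')

end Aux

/-- a connected subgraph of `Γ` is A-complete iff it is complete
(contains every edge of `Γ` both of whose endpoints are among its vertices);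
an arbitrary subgraph is A-complete iff each of its connected components is. -/
theorem stmt_10 {Vt E : Type*} [Fintype Vt] [DecidableEq Vt] [Fintype E]
    (ini fin : E → Vt) (hloop : ∀ a, ini a ≠ fin a)
    (hsimple : Function.Injective fun a => s(ini a, fin a)) :
    (∀ A : Set E, EdgeConnected ini fin A →
      (IsAComplete ini fin A ↔
        ∀ a : E, ini a ∈ vertexSet ini fin A → fin a ∈ vertexSet ini fin A → a ∈ A)) ∧
    (∀ A : Set E, IsAComplete ini fin A ↔
      ∀ a ∈ A, IsAComplete ini fin
        {b ∈ A | (graphSub ini fin A).Reachable (ini a) (ini b)}) := by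
  constructor
  · -- Part (i)
    intro A hconn
    rw [aux_isAComplete_iff ini fin hloop hsimple A]
    constructor
    · intro h a hi hf
      apply h a
      obtain ⟨c, hc, hic⟩ := hi
      obtain ⟨d, hd, hfd⟩ := hf
      have h1 : (graphSub ini fin A).Reachable (ini a) (ini c) := by
        rcases hic with h' | h'
        · rw [h']
        · rw [h']; exact (aux_adj_of_mem ini fin hloop hc).symm.reachable
      have h2 : (graphSub ini fin A).Reachable (ini d) (fin a) := by
        rcases hfd with h' | h'
        · rw [h']
        · rw [h']; exact (aux_adj_of_mem ini fin hloop hd).reachable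
      exact h1.trans ((hconn c hc d hd).trans h2)
    · intro h b hb
      exact h b (aux_mem_vertexSet ini fin hb (hloop b))
        (aux_mem_vertexSet ini fin hb.symm (Ne.symm (hloop b)))
  · -- Part (ii)
    intro A
    constructor
    · intro hA a ha
      rw [aux_isAComplete_iff ini fin hloop hsimple]
      intro b hb
      have hsub : {b ∈ A | (graphSub ini fin A).Reachable (ini a) (ini b)} ⊆ A :=
        fun _ h' => h'.1
      have hbA : (graphSub ini fin A).Reachable (ini b) (fin b) :=
        aux_reach_mono ini fin hsub hb
      have hbin : b ∈ A := (aux_isAComplete_iff ini fin hloop hsimple A).mp hA b hbA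
      have hV : ini b ∈ vertexSet ini fin {b ∈ A | (graphSub ini fin A).Reachable (ini a) (ini b)} :=
        aux_mem_vertexSet ini fin hb (hloop b)
      obtain ⟨c, ⟨hcA, hrc⟩, hic⟩ := hV
      have hcb : (graphSub ini fin A).Reachable (ini c) (ini b) := by
        rcases hic with h' | h'
        · rw [h']
        · rw [h']; exact (aux_adj_of_mem ini fin hloop hcA).reachable
      exact ⟨hbin, hrc.trans hcb⟩
    · intro h
      rw [aux_isAComplete_iff ini fin hloop hsimple]
      intro b hb
      have hV : ini b ∈ vertexSet ini fin A := aux_mem_vertexSet ini fin hb (hloop b)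
      obtain ⟨c, hc, hic⟩ := hV
      have hr : (graphSub ini fin A).Reachable (ini c) (ini b) := by
        rcases hic with h' | h'
        · rw [h']
        · rw [h']; exact (aux_adj_of_mem ini fin hloop hc).reachable
      obtain ⟨p⟩ := hb
      have hreach' := aux_reach_component ini fin (r := ini c) p hr
      exact ((aux_isAComplete_iff ini fin hloop hsimple _).mp (h c hc) b hreach').1
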